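/- In a synchronized Bellman–Ford computation where in each super-round i every vertex v sends the set S'^{(i)}_G[k](v) (tuples of the k nearest sampled sources under i-hop-limited distance, with their distances, hop counts, and predecessors, under the fixed tie-breaking order) to all neighbors and then keeps the k best tuples received, the set computed by v at the end of super-round i equals S'^{(i+1)}_G[k](v). Consequently, after (√n·k) super-rounds every vertex knows its k nearest sampled sources under (√n·k)-limited distance. -/

import Mathlib

open scoped ENNReal

namespace Stmt10

variable {V : Type*}

/-- Endpoint of a walk starting at `u` with subsequent vertices given by the list. -/
def last : V → List V → V
  | u, [] => u
  | _, x :: xs => last x xs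

/-- Weight of a walk starting at `u` with subsequent vertices given by the list. -/
noncomputable def cost (w : V → V → ℝ≥0∞) : V → List V → ℝ≥0∞
  | _, [] => 0
  | u, x :: xs => w u x + cost w x xs

/-- `h`-hop-limited distance from `u` to `v` (non-edges have weight `⊤`). -/
noncomputable def hdist (w : V → V → ℝ≥0∞) (h : ℕ) (u v : V) : ℝ≥0∞ :=
  ⨅ p ∈ {p : List V | p.length ≤ h ∧ last u p = v}, cost w u p

/-- Shortest-path distance from `u` to `v`. -/
noncomputable def dist (w : V → V → ℝ≥0∞) (u v : V) : ℝ≥0∞ :=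
  ⨅ h : ℕ, hdist w h u v

/-- `S` is a set of (at most) `k` closest reachable vertices to `v` (excluding `v`),
with ties broken arbitrarily: members of `S` are reachable and distinct from `v`,
`|S| ≤ k`, every member is at least as close as every reachable non-member, and `S`
has exactly `k` elements unless it already contains all reachable vertices. -/
def IsKClosest [Fintype V] (w : V → V → ℝ≥0∞) (k : ℕ) (v : V) (S : Finset V) : Prop :=
  (∀ u ∈ S, u ≠ v ∧ dist w v u < ⊤) ∧ S.card ≤ k ∧
  (∀ y ∈ S, ∀ z, z ∉ S → z ≠ v → dist w v z < ⊤ → dist w v y ≤ dist w v z) ∧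
  (∀ z, z ∉ S → z ≠ v → dist w v z < ⊤ → S.card = k)

/-- Weight function of the union `G ∪ G^(k)` of the graph with the `k`-shortcut hopset:
hopset edges `(u,v)` (present when `u ∈ S v` or `v ∈ S u`) get weight `d_G(u,v)`. -/
noncomputable def unionW [Fintype V] [DecidableEq V] (w : V → V → ℝ≥0∞) (S : V → Finset V)
    (u v : V) : ℝ≥0∞ :=
  if u ∈ S v ∨ v ∈ S u then min (w u v) (dist w u v) else w u v


/-- Minimum number of hops of an `i`-hop-limited minimum-weight `u`–`v` path. -/
noncomputable def minHops (w : V → V → ℝ≥0∞) (i : ℕ) (u v : V) : ℕ :=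
  sInf {ℓ : ℕ | ∃ p : List V, p.length = ℓ ∧ ℓ ≤ i ∧ last u p = v ∧ cost w u p = hdist w i u v}

/-- Tie-breaking key of a tuple `(source, distance estimate, hop count)`:
smaller distance first, then fewer hops, then smaller identifier of the source. -/
def tkey (rank : V → ℕ) (t : V × ℝ≥0∞ × ℕ) : ℝ≥0∞ × ℕ × ℕ :=
  (t.2.1, t.2.2, rank t.1)

/-- Lexicographic comparison of tuple keys. -/
def tkeyLe (rank : V → ℕ) (s t : V × ℝ≥0∞ × ℕ) : Prop :=
  tkey rank s = tkey rank t ∨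
    Prod.Lex (· < ·) (Prod.Lex (· < ·) (· < ·)) (tkey rank s) (tkey rank t)

/-- `S` consists of the `k` best tuples of the candidate set `C`, keeping for each
source only the best tuple, under the order `(distance, hops, source id)`. -/
def IsKBest (k : ℕ) (rank : V → ℕ) (C S : Finset (V × ℝ≥0∞ × ℕ)) : Prop :=
  S ⊆ C ∧ S.card ≤ k ∧
  (∀ s ∈ S, ∀ t ∈ S, s.1 = t.1 → s = t) ∧
  (∀ s ∈ S, ∀ c ∈ C, c.1 = s.1 → tkeyLe rank s c) ∧
  (∀ s ∈ S, ∀ c ∈ C, (∀ t ∈ S, t.1 ≠ c.1) → tkeyLe rank s c) ∧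
  (S.card < k → ∀ c ∈ C, ∃ t ∈ S, t.1 = c.1)

open Classical in
/-- Candidate tuples of vertex `v` at the end of a super-round: its own current
tuples, together with every tuple received from a neighbor `u`, with the distance
increased by `ω(u,v)` and the hop count increased by one. -/
noncomputable def cand [Fintype V] (w : V → V → ℝ≥0∞)
    (Bi : V → Finset (V × ℝ≥0∞ × ℕ)) (v : V) : Finset (V × ℝ≥0∞ × ℕ) :=
  Bi v ∪ (Finset.univ.filter fun u => w u v < ⊤).biUnion
    (fun u => (Bi u).image fun t => (t.1, t.2.1 + w u v, t.2.2 + 1))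

/-- `S` is the set of the `k` nearest sampled sources to `v` with respect to
`i`-hop-limited distance in `G`, with ties broken first by the number of hops of the
corresponding minimum-weight `i`-limited path and then by source identifiers. -/
def KNearestSources [Fintype V] (w : V → V → ℝ≥0∞) (V' : Finset V) (k : ℕ)
    (rank : V → ℕ) (i : ℕ) (v : V) (S : Finset V) : Prop :=
  S ⊆ V' ∧ S.card ≤ k ∧ (∀ y ∈ S, hdist w i v y < ⊤) ∧
  (∀ y ∈ S, ∀ z ∈ V', z ∉ S → hdist w i v z < ⊤ →
    Prod.Lex (· < ·) (Prod.Lex (· < ·) (· < ·))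
      (hdist w i v y, minHops w i v y, rank y)
      (hdist w i v z, minHops w i v z, rank z)) ∧
  (∀ z ∈ V', hdist w i v z < ⊤ → z ∉ S → S.card = k)

/-! ### Auxiliary lemmas -/

section Helpers

variable {w : V → V → ℝ≥0∞} {i j : ℕ} {u v x : V}

lemma hdist_le (p : List V) (hp : p.length ≤ i) (hl : last u p = v) :
    hdist w i u v ≤ cost w u p :=
  iInf₂_le p ⟨hp, hl⟩

@[simp] lemma hdist_self (w : V → V → ℝ≥0∞) (i : ℕ) (v : V) : hdist w i v v = 0 :=
  le_antisymm (by simpa [cost] using hdist_le (w := w) (u := v) (v := v) [] (by simp) rfl)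
    (zero_le)

lemma hdist_zero_of_ne (h : x ≠ v) : hdist w 0 v x = ⊤ := by
  rw [hdist, iInf_eq_top]
  intro p
  rw [iInf_eq_top]
  rintro ⟨hp, hl⟩
  rw [Nat.le_zero, List.length_eq_zero_iff] at hp
  subst hp
  exact absurd hl.symm h

lemma hdist_anti (hij : i ≤ j) : hdist w j u v ≤ hdist w i u v :=
  le_iInf₂ fun p hp => hdist_le p (hp.1.trans hij) hp.2

lemma exists_hdist_path [Finite V] (hfin : hdist w i v x < ⊤) :
    ∃ p : List V, p.length ≤ i ∧ last v p = x ∧ cost w v p = hdist w i v x := by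
  classical
  set S : Set (List V) := {p | p.length ≤ i ∧ last v p = x} with hSdef
  have hS : S.Finite := (List.finite_length_le V i).subset fun p hp => hp.1
  have h1 : hdist w i v x = sInf (cost w v '' S) := by rw [sInf_image]; rfl
  have hne : (cost w v '' S).Nonempty := by
    by_contra hne
    rw [Set.not_nonempty_iff_eq_empty] at hne
    rw [h1, hne, sInf_empty] at hfin
    exact absurd hfin (lt_irrefl _)
  have hmem := hne.csInf_mem (hS.image _)
  rw [← h1] at hmem
  obtain ⟨p, hp, hc⟩ := hmem
  exact ⟨p, hp.1, hp.2, hc⟩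

lemma minHops_le (p : List V) (hlen : p.length ≤ i) (hl : last v p = x)
    (hc : cost w v p = hdist w i v x) : minHops w i v x ≤ p.length :=
  Nat.sInf_le ⟨p, rfl, hlen, hl, hc⟩

lemma exists_minHops_path [Finite V] (hfin : hdist w i v x < ⊤) :
    ∃ p : List V, p.length = minHops w i v x ∧ p.length ≤ i ∧ last v p = x ∧
      cost w v p = hdist w i v x := by
  obtain ⟨p, h1, h2, h3⟩ := exists_hdist_path hfin
  have hne : {ℓ : ℕ | ∃ p : List V, p.length = ℓ ∧ ℓ ≤ i ∧ last v p = x ∧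
      cost w v p = hdist w i v x}.Nonempty := ⟨p.length, p, rfl, h1, h2, h3⟩
  obtain ⟨q, hq1, hq2, hq3, hq4⟩ := Nat.sInf_mem hne
  exact ⟨q, hq1, hq1 ▸ hq2, hq3, hq4⟩

@[simp] lemma minHops_self (w : V → V → ℝ≥0∞) (i : ℕ) (v : V) : minHops w i v v = 0 :=
  Nat.le_zero.1 (by
    simpa [cost] using minHops_le (w := w) (i := i) (v := v) (x := v) [] (by simp) rfl
      (by simp [cost]))

lemma eq_of_minHops_zero [Finite V] (hfin : hdist w i v x < ⊤)
    (h0 : minHops w i v x = 0) : x = v := by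
  obtain ⟨p, hp, _, hl, _⟩ := exists_minHops_path hfin
  rw [h0, List.length_eq_zero_iff] at hp
  subst hp
  exact hl.symm

lemma hdist_succ_le [Finite V] (w : V → V → ℝ≥0∞) (i : ℕ) (v u x : V) :
    hdist w (i + 1) v x ≤ w v u + hdist w i u x := by
  by_cases htop : hdist w i u x = ⊤
  · simp [htop]
  · obtain ⟨q, hq1, hq2, hq3⟩ := exists_hdist_path (lt_top_iff_ne_top.2 htop)
    calc hdist w (i + 1) v x ≤ cost w v (u :: q) :=
          hdist_le (u :: q) (by simpa using Nat.succ_le_succ hq1) hq2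
      _ = w v u + cost w u q := rfl
      _ = w v u + hdist w i u x := by rw [hq3]

lemma minHops_succ_le [Finite V] (hfin : hdist w i u x < ⊤)
    (heq : hdist w (i + 1) v x = w v u + hdist w i u x) :
    minHops w (i + 1) v x ≤ minHops w i u x + 1 := by
  obtain ⟨q, hq0, hq1, hq2, hq3⟩ := exists_minHops_path hfin
  have := minHops_le (w := w) (i := i + 1) (v := v) (x := x) (u :: q)
    (by simpa using Nat.succ_le_succ hq1) hq2 (by rw [heq]; show w v u + cost w u q = _; rw [hq3])
  simpa [hq0] using this

lemma minHops_succ_le_self [Finite V] (hfin : hdist w i v x < ⊤)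
    (heq : hdist w (i + 1) v x = hdist w i v x) :
    minHops w (i + 1) v x ≤ minHops w i v x := by
  obtain ⟨q, hq0, hq1, hq2, hq3⟩ := exists_minHops_path hfin
  have := minHops_le (w := w) (i := i + 1) (v := v) (x := x) q
    (hq1.trans (Nat.le_succ _)) hq2 (by rw [heq, hq3])
  simpa [hq0] using this

end Helpers

/-! ### Lexicographic key machinery -/

abbrev klt : (ℝ≥0∞ × ℕ × ℕ) → (ℝ≥0∞ × ℕ × ℕ) → Prop :=
  Prod.Lex (· < ·) (Prod.Lex (· < ·) (· < ·))

def toL3 (a : ℝ≥0∞ × ℕ × ℕ) : ℝ≥0∞ ×ₗ (ℕ ×ₗ ℕ) := toLex (a.1, toLex (a.2.1, a.2.2))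

lemma toL3_inj : Function.Injective (toL3 : (ℝ≥0∞ × ℕ × ℕ) → _) := by
  intro a b h
  simp only [toL3, toLex_inj, Prod.ext_iff] at h
  exact Prod.ext h.1 (Prod.ext h.2.1 h.2.2)

lemma klt_iff_toL3 (a b : ℝ≥0∞ × ℕ × ℕ) : klt a b ↔ toL3 a < toL3 b := by
  rw [toL3, toL3, Prod.Lex.lt_iff, Prod.Lex.lt_iff]
  rw [show klt a b ↔ _ from Prod.lex_iff]
  constructor
  · rintro (h | ⟨h1, h2⟩)
    · exact Or.inl h
    · rw [Prod.lex_iff] at h2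
      exact Or.inr ⟨h1, by simpa using h2⟩
  · rintro (h | ⟨h1, h2⟩)
    · exact Or.inl h
    · refine Or.inr ⟨h1, ?_⟩
      rw [Prod.lex_iff]
      simpa using h2

lemma klt_irrefl (a : ℝ≥0∞ × ℕ × ℕ) : ¬ klt a a := by
  rw [klt_iff_toL3]; exact lt_irrefl _

lemma klt_trans {a b c : ℝ≥0∞ × ℕ × ℕ} (h1 : klt a b) (h2 : klt b c) : klt a c := by
  rw [klt_iff_toL3] at *; exact lt_trans h1 h2

lemma klt_asymm {a b : ℝ≥0∞ × ℕ × ℕ} (h1 : klt a b) (h2 : klt b a) : False := by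
  rw [klt_iff_toL3] at *; exact absurd h2 (lt_asymm h1)

lemma klt_iff' (a b : ℝ≥0∞ × ℕ × ℕ) :
    klt a b ↔ a.1 < b.1 ∨ a.1 = b.1 ∧ (a.2.1 < b.2.1 ∨ a.2.1 = b.2.1 ∧ a.2.2 < b.2.2) := by
  rw [show klt a b ↔ _ from Prod.lex_iff]
  constructor
  · rintro (h | ⟨h1, h2⟩)
    · exact Or.inl h
    · rw [Prod.lex_iff] at h2; exact Or.inr ⟨h1, h2⟩
  · rintro (h | ⟨h1, h2⟩)
    · exact Or.inl h
    · exact Or.inr ⟨h1, (Prod.lex_iff).2 h2⟩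

lemma klt_mk_iff (d1 d2 : ℝ≥0∞) (h1 h2 r1 r2 : ℕ) :
    klt (d1, h1, r1) (d2, h2, r2) ↔ d1 < d2 ∨ d1 = d2 ∧ (h1 < h2 ∨ h1 = h2 ∧ r1 < r2) := by
  simpa using klt_iff' (d1, h1, r1) (d2, h2, r2)

lemma klt_of_le_of_ne {a b : ℝ≥0∞ × ℕ × ℕ} (hle : toL3 a ≤ toL3 b) (hne : a ≠ b) :
    klt a b := by
  rw [klt_iff_toL3]
  exact lt_of_le_of_ne hle (fun h => hne (toL3_inj h))

lemma tkeyLe_iff (rank : V → ℕ) (s t : V × ℝ≥0∞ × ℕ) :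
    tkeyLe rank s t ↔ tkey rank s = tkey rank t ∨ klt (tkey rank s) (tkey rank t) :=
  Iff.rfl

lemma tkey_eq_of_le_le {rank : V → ℕ} {s t : V × ℝ≥0∞ × ℕ}
    (h1 : tkeyLe rank s t) (h2 : tkeyLe rank t s) : tkey rank s = tkey rank t := by
  rcases h1 with h1 | h1
  · exact h1
  rcases h2 with h2 | h2
  · exact h2.symm
  · exact absurd h2 (fun h => klt_asymm h1 h)

/-! ### Existence of a canonical set of `k` nearest sources -/

lemma exists_knearest [Fintype V] [DecidableEq V] (w : V → V → ℝ≥0∞) (V' : Finset V)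
    (rank : V → ℕ) (hrank : Function.Injective rank) (i : ℕ) (v : V) (k : ℕ) :
    ∃ S, KNearestSources w V' k rank i v S := by
  classical
  induction k with
  | zero =>
    refine ⟨∅, Finset.empty_subset _, le_refl _, ?_, ?_, ?_⟩ <;> simp
  | succ k ih =>
    obtain ⟨S, hS1, hS2, hS3, hS4, hS5⟩ := ih
    set F : Finset V := V'.filter (fun z => hdist w i v z < ⊤) with hF
    by_cases hFS : F ⊆ S
    · refine ⟨S, hS1, hS2.trans (Nat.le_succ _), hS3, hS4, ?_⟩
      intro z hz hfin hzS
      exact absurd (hFS (Finset.mem_filter.2 ⟨hz, hfin⟩)) hzS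
    · have hne : (F \ S).Nonempty := by
        obtain ⟨z0, hz0F, hz0S⟩ := Finset.not_subset.1 hFS
        exact ⟨z0, Finset.mem_sdiff.2 ⟨hz0F, hz0S⟩⟩
      obtain ⟨m, hmF, hmin⟩ := Finset.exists_min_image (F \ S)
        (fun z => toL3 (hdist w i v z, minHops w i v z, rank z)) hne
      rw [Finset.mem_sdiff] at hmF
      obtain ⟨hmF', hmS⟩ := hmF
      rw [Finset.mem_filter] at hmF'
      have hkey : ∀ z, z ∈ V' → z ∉ insert m S → hdist w i v z < ⊤ →
          klt (hdist w i v m, minHops w i v m, rank m)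
              (hdist w i v z, minHops w i v z, rank z) := by
        intro z hz hzS hfin
        rw [Finset.mem_insert, not_or] at hzS
        have hzFS : z ∈ F \ S := Finset.mem_sdiff.2 ⟨Finset.mem_filter.2 ⟨hz, hfin⟩, hzS.2⟩
        refine klt_of_le_of_ne (hmin z hzFS) ?_
        intro h
        exact hzS.1 (hrank (congrArg (fun p => p.2.2) h)).symm
      refine ⟨insert m S, ?_, ?_, ?_, ?_, ?_⟩
      · intro z hz
        rcases Finset.mem_insert.1 hz with rfl | hz
        · exact hmF'.1
        · exact hS1 hz
      · rw [Finset.card_insert_of_notMem hmS]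
        exact Nat.succ_le_succ hS2
      · intro y hy
        rcases Finset.mem_insert.1 hy with rfl | hy
        · exact hmF'.2
        · exact hS3 y hy
      · intro y hy z hz hzS hfin
        rcases Finset.mem_insert.1 hy with rfl | hy
        · exact hkey z hz hzS hfin
        · exact hS4 y hy z hz (fun h => hzS (Finset.mem_insert_of_mem h)) hfin
      · intro z hz hfin hzS
        rw [Finset.card_insert_of_notMem hmS,
          hS5 z hz hfin (fun h => hzS (Finset.mem_insert_of_mem h))]


lemma tkeyLe_fst_le {rank : V → ℕ} {s t : V × ℝ≥0∞ × ℕ} (h : tkeyLe rank s t) :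
    s.2.1 ≤ t.2.1 := by
  rcases h with h | h
  · exact le_of_eq (congrArg (fun p : ℝ≥0∞ × ℕ × ℕ => p.1) h)
  · rcases (klt_iff' _ _).1 h with h | ⟨h, _⟩
    · exact le_of_lt h
    · exact le_of_eq h

/-- The canonical tuple of source `x` at vertex `v` for hop bound `j`. -/
noncomputable def btup (w : V → V → ℝ≥0∞) (j : ℕ) (v x : V) : V × ℝ≥0∞ × ℕ :=
  (x, hdist w j v x, minHops w j v x)

lemma mem_cand [Fintype V] {w : V → V → ℝ≥0∞} {Bi : V → Finset (V × ℝ≥0∞ × ℕ)} {v : V}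
    {c : V × ℝ≥0∞ × ℕ} :
    c ∈ cand w Bi v ↔ c ∈ Bi v ∨
      ∃ u, w u v < ⊤ ∧ ∃ t ∈ Bi u, c = (t.1, t.2.1 + w u v, t.2.2 + 1) := by
  classical
  simp only [cand, Finset.mem_union, Finset.mem_biUnion, Finset.mem_filter, Finset.mem_image,
    Finset.mem_univ, true_and]
  constructor
  · rintro (h | ⟨u, hu, t, ht, h⟩)
    · exact Or.inl h
    · exact Or.inr ⟨u, hu, t, ht, h.symm⟩
  · rintro (h | ⟨u, hu, t, ht, h⟩)
    · exact Or.inl h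
    · exact Or.inr ⟨u, hu, t, ht, h.symm⟩

/-- The inductive step: one super-round of truncated Bellman–Ford. -/
lemma step_correct [Fintype V] [DecidableEq V]
    (w : V → V → ℝ≥0∞) (hsymm : ∀ u v, w u v = w v u)
    (V' : Finset V) (k : ℕ) (hk : 1 ≤ k) (rank : V → ℕ) (hrank : Function.Injective rank)
    (i : ℕ) (Bi : V → Finset (V × ℝ≥0∞ × ℕ))
    (hgood : ∀ u, ∀ t ∈ Bi u, t.1 ∈ V' ∧ t.2.1 = hdist w i u t.1 ∧ t.2.2 = minHops w i u t.1)
    (hnear : ∀ u, KNearestSources w V' k rank i u ((Bi u).image Prod.fst))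
    (v : V) (T : Finset (V × ℝ≥0∞ × ℕ)) (hT : IsKBest k rank (cand w Bi v) T) :
    (∀ t ∈ T, t.1 ∈ V' ∧ t.2.1 = hdist w (i + 1) v t.1 ∧ t.2.2 = minHops w (i + 1) v t.1) ∧
    KNearestSources w V' k rank (i + 1) v (T.image Prod.fst) := by
  classical
  obtain ⟨hTsub, hTcard, hTuniq, hTbest, hTbest2, hTfull⟩ := hT
  -- Step A: every candidate's key is at least the canonical key of its source.
  have L1 : ∀ c ∈ cand w Bi v, c.1 ∈ V' ∧ c.2.1 < ⊤ ∧ tkeyLe rank (btup w (i + 1) v c.1) c := by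
    intro c hc
    rcases mem_cand.1 hc with hc | ⟨u, hu, t, ht, rfl⟩
    · obtain ⟨h1, h2, h3⟩ := hgood v c hc
      have hximg : c.1 ∈ (Bi v).image Prod.fst := Finset.mem_image_of_mem _ hc
      have hfin : hdist w i v c.1 < ⊤ := (hnear v).2.2.1 c.1 hximg
      have hfin' : c.2.1 < ⊤ := by rw [h2]; exact hfin
      refine ⟨h1, hfin', ?_⟩
      have hle : hdist w (i + 1) v c.1 ≤ c.2.1 := by rw [h2]; exact hdist_anti (Nat.le_succ i)
      rcases lt_or_eq_of_le hle with hlt | heq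
      · exact Or.inr ((klt_iff' _ _).2 (Or.inl hlt))
      · have hm : minHops w (i + 1) v c.1 ≤ c.2.2 := by
          rw [h3]; exact minHops_succ_le_self hfin (heq.trans h2)
        rcases lt_or_eq_of_le hm with hlt2 | heq2
        · exact Or.inr ((klt_iff' _ _).2 (Or.inr ⟨heq, Or.inl hlt2⟩))
        · exact Or.inl (Prod.ext heq (Prod.ext heq2 rfl))
    · obtain ⟨h1, h2, h3⟩ := hgood u t ht
      have hximg : t.1 ∈ (Bi u).image Prod.fst := Finset.mem_image_of_mem _ ht
      have hfinu : hdist w i u t.1 < ⊤ := (hnear u).2.2.1 t.1 hximg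
      have hfin' : t.2.1 + w u v < ⊤ := ENNReal.add_lt_top.2 ⟨by rw [h2]; exact hfinu, hu⟩
      have hrw : w v u + hdist w i u t.1 = t.2.1 + w u v := by
        rw [h2, hsymm u v, add_comm]
      have hle : hdist w (i + 1) v t.1 ≤ t.2.1 + w u v := by
        rw [← hrw]; exact hdist_succ_le w i v u t.1
      refine ⟨h1, hfin', ?_⟩
      rcases lt_or_eq_of_le hle with hlt | heq
      · exact Or.inr ((klt_iff' _ _).2 (Or.inl hlt))
      · have heqw : hdist w (i + 1) v t.1 = w v u + hdist w i u t.1 := by rw [heq, hrw]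
        have hm : minHops w (i + 1) v t.1 ≤ t.2.2 + 1 := by
          rw [h3]; exact minHops_succ_le hfinu heqw
        rcases lt_or_eq_of_le hm with hlt2 | heq2
        · exact Or.inr ((klt_iff' _ _).2 (Or.inr ⟨heq, Or.inl hlt2⟩))
        · exact Or.inl (Prod.ext heq (Prod.ext heq2 rfl))
  obtain ⟨Sstar, hSsub, hScard, hSfin, hSord, hSfull⟩ :=
    exists_knearest w V' rank hrank (i + 1) v k
  -- Step B: canonical tuples of the true k nearest sources are candidates.
  have L2 : ∀ x ∈ Sstar, btup w (i + 1) v x ∈ cand w Bi v := by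
    intro x hx
    have hxV : x ∈ V' := hSsub hx
    have hfin : hdist w (i + 1) v x < ⊤ := hSfin x hx
    obtain ⟨p, hp0, hp1, hp2, hp3⟩ := exists_minHops_path hfin
    rcases p with _ | ⟨u, q⟩
    · -- the empty path: x = v
      have hxv : x = v := hp2.symm
      subst hxv
      have h0 : btup w (i + 1) x x = (x, 0, 0) := by
        simp [btup]
      have hximg : x ∈ (Bi x).image Prod.fst := by
        by_contra hxi
        obtain ⟨_, _, _, hord, hfull⟩ := hnear x
        have hcard : ((Bi x).image Prod.fst).card = k := hfull x hxV (by simp) hxi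
        have hpos : 0 < ((Bi x).image Prod.fst).card := by rw [hcard]; exact hk
        obtain ⟨y, hy⟩ := Finset.card_pos.1 hpos
        have hkey := hord y hy x hxV hxi (by simp)
        simp only [hdist_self, minHops_self] at hkey
        rcases (klt_mk_iff _ _ _ _ _ _).1 hkey with h | ⟨h1, h | ⟨h2, h3⟩⟩
        · simp at h
        · exact absurd h (Nat.not_lt_zero _)
        · have hyfin : hdist w i x y < ⊤ := (hnear x).2.2.1 y hy
          have hyx : y = x := eq_of_minHops_zero hyfin h2
          exact hxi (hyx ▸ hy)
      obtain ⟨t, ht, ht1⟩ := Finset.mem_image.1 hximg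
      obtain ⟨_, h2, h3⟩ := hgood x t ht
      have htx : t = (x, 0, 0) := by
        refine Prod.ext ht1 (Prod.ext ?_ ?_) <;> simp [h2, h3, ht1]
      rw [h0, ← htx]
      exact mem_cand.2 (Or.inl ht)
    · -- path through a first neighbor u
      have hcost : w v u + cost w u q = hdist w (i + 1) v x := hp3
      have hsum : w v u + cost w u q < ⊤ := by rw [hcost]; exact hfin
      obtain ⟨hw, hcq⟩ := ENNReal.add_lt_top.1 hsum
      have hql : q.length ≤ i := Nat.succ_le_succ_iff.1 (by simpa using hp1)
      have hlast : last u q = x := hp2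
      have hqc : cost w u q = hdist w i u x := by
        refine le_antisymm ?_ (hdist_le q hql hlast)
        by_contra hlt
        push_neg at hlt
        have hfinu : hdist w i u x < ⊤ := hlt.trans hcq
        obtain ⟨q', hq'1, hq'2, hq'3⟩ := exists_hdist_path hfinu
        have hle2 : hdist w (i + 1) v x ≤ cost w v (u :: q') :=
          hdist_le (u :: q') (by simpa using Nat.succ_le_succ hq'1) hq'2
        have hstrict : cost w v (u :: q') < hdist w (i + 1) v x := by
          show w v u + cost w u q' < _
          rw [hq'3, ← hcost]
          exact ENNReal.add_lt_add_left hw.ne hlt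
        exact absurd hle2 (not_le.2 hstrict)
      have hfinu : hdist w i u x < ⊤ := by rw [← hqc]; exact hcq
      have heqd : hdist w (i + 1) v x = w v u + hdist w i u x := by rw [← hqc, hcost]
      have hmh : minHops w (i + 1) v x = minHops w i u x + 1 := by
        refine le_antisymm (minHops_succ_le hfinu heqd) ?_
        have h1 : minHops w i u x ≤ q.length := minHops_le q hql hlast hqc
        have h2 : q.length + 1 = minHops w (i + 1) v x := by simpa using hp0
        omega
      have hximg : x ∈ (Bi u).image Prod.fst := by
        by_contra hxi
        obtain ⟨hu1, hu2, hu3, hu4, hu5⟩ := hnear u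
        have hcard : ((Bi u).image Prod.fst).card = k := hu5 x hxV hfinu hxi
        have htrans : ∀ y ∈ (Bi u).image Prod.fst,
            klt (hdist w (i + 1) v y, minHops w (i + 1) v y, rank y)
                (hdist w (i + 1) v x, minHops w (i + 1) v x, rank x) := by
          intro y hy
          have hkey := hu4 y hy x hxV hxi hfinu
          have hyfin : hdist w i u y < ⊤ := hu3 y hy
          have hyle : hdist w (i + 1) v y ≤ w v u + hdist w i u y := hdist_succ_le w i v u y
          rcases (klt_mk_iff _ _ _ _ _ _).1 hkey with hlt | ⟨heq1, hrest⟩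
          · refine (klt_mk_iff _ _ _ _ _ _).2 (Or.inl ?_)
            calc hdist w (i + 1) v y ≤ w v u + hdist w i u y := hyle
              _ < w v u + hdist w i u x := ENNReal.add_lt_add_left hw.ne hlt
              _ = hdist w (i + 1) v x := heqd.symm
          · have hyle' : hdist w (i + 1) v y ≤ hdist w (i + 1) v x := by
              rw [heqd, ← heq1]; exact hyle
            rcases lt_or_eq_of_le hyle' with hlt | heq
            · exact (klt_mk_iff _ _ _ _ _ _).2 (Or.inl hlt)
            · have heqy : hdist w (i + 1) v y = w v u + hdist w i u y := by
                rw [heq, heqd, heq1]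
              have hmy : minHops w (i + 1) v y ≤ minHops w i u y + 1 :=
                minHops_succ_le hyfin heqy
              rcases hrest with hlt2 | ⟨heq2, hlt3⟩
              · refine (klt_mk_iff _ _ _ _ _ _).2 (Or.inr ⟨heq, Or.inl ?_⟩)
                calc minHops w (i + 1) v y ≤ minHops w i u y + 1 := hmy
                  _ < minHops w i u x + 1 := Nat.succ_lt_succ hlt2
                  _ = minHops w (i + 1) v x := hmh.symm
              · have hmy' : minHops w (i + 1) v y ≤ minHops w (i + 1) v x := by
                  rw [hmh, ← heq2]; exact hmy
                rcases lt_or_eq_of_le hmy' with hlt2 | heq3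
                · exact (klt_mk_iff _ _ _ _ _ _).2 (Or.inr ⟨heq, Or.inl hlt2⟩)
                · exact (klt_mk_iff _ _ _ _ _ _).2 (Or.inr ⟨heq, Or.inr ⟨heq3, hlt3⟩⟩)
        have himgSub : (Bi u).image Prod.fst ⊆ Sstar := by
          intro y hy
          by_contra hyS
          have hyV : y ∈ V' := hu1 hy
          have hyfinv : hdist w (i + 1) v y < ⊤ :=
            lt_of_le_of_lt (hdist_succ_le w i v u y)
              (ENNReal.add_lt_top.2 ⟨hw, hu3 y hy⟩)
          exact klt_asymm (htrans y hy) (hSord x hx y hyV hyS hyfinv)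
        have hins : insert x ((Bi u).image Prod.fst) ⊆ Sstar := by
          intro z hz
          rcases Finset.mem_insert.1 hz with rfl | hz
          · exact hx
          · exact himgSub hz
        have hcard2 := Finset.card_le_card hins
        rw [Finset.card_insert_of_notMem hxi, hcard] at hcard2
        have := hScard
        omega
      obtain ⟨t, ht, ht1⟩ := Finset.mem_image.1 hximg
      obtain ⟨_, h2, h3⟩ := hgood u t ht
      refine mem_cand.2 (Or.inr ⟨u, ?_, t, ht, ?_⟩)
      · rw [hsymm u v]; exact hw
      · refine Prod.ext ht1.symm (Prod.ext ?_ ?_)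
        · show hdist w (i + 1) v x = t.2.1 + w u v
          rw [h2, ht1, heqd, hsymm u v, add_comm]
        · show minHops w (i + 1) v x = t.2.2 + 1
          rw [h3, ht1, hmh]
  -- Step C: every stored tuple is the canonical tuple of a true k-nearest source.
  have step1 : ∀ s ∈ T, s.1 ∈ Sstar ∧ s = btup w (i + 1) v s.1 := by
    intro s hs
    have hsc := hTsub hs
    obtain ⟨hsV, hsfin, hskey⟩ := L1 s hsc
    have hfinv : hdist w (i + 1) v s.1 < ⊤ := lt_of_le_of_lt (tkeyLe_fst_le hskey) hsfin
    have hmem : s.1 ∈ Sstar := by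
      by_contra hxS
      have hcard : Sstar.card = k := hSfull s.1 hsV hfinv hxS
      have hns : ¬ (Sstar ⊆ T.image Prod.fst) := by
        intro hsub
        have h1 : insert s.1 Sstar ⊆ T.image Prod.fst := by
          intro z hz
          rcases Finset.mem_insert.1 hz with rfl | hz
          · exact Finset.mem_image_of_mem _ hs
          · exact hsub hz
        have h2 := Finset.card_le_card h1
        rw [Finset.card_insert_of_notMem hxS, hcard] at h2
        have h3 : (T.image Prod.fst).card ≤ T.card := Finset.card_image_le
        omega
      obtain ⟨y0, hy0S, hy0T⟩ := Finset.not_subset.1 hns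
      have hbty0 : btup w (i + 1) v y0 ∈ cand w Bi v := L2 y0 hy0S
      have hnone : ∀ t ∈ T, t.1 ≠ (btup w (i + 1) v y0).1 := by
        intro t ht h
        have h' : t.1 = y0 := h
        exact hy0T (h' ▸ Finset.mem_image_of_mem Prod.fst ht)
      have hle := hTbest2 s hs (btup w (i + 1) v y0) hbty0 hnone
      have h1 : klt (tkey rank (btup w (i + 1) v y0)) (tkey rank (btup w (i + 1) v s.1)) :=
        hSord y0 hy0S s.1 hsV hxS hfinv
      rcases hskey with he | hlt1
      · rcases hle with he2 | hlt2
        · rw [he.trans he2] at h1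
          exact klt_irrefl _ h1
        · rw [he] at h1
          exact klt_asymm h1 hlt2
      · rcases hle with he2 | hlt2
        · rw [← he2] at h1
          exact klt_asymm h1 hlt1
        · exact klt_irrefl _ (klt_trans (klt_trans h1 hlt1) hlt2)
    have hbts : btup w (i + 1) v s.1 ∈ cand w Bi v := L2 s.1 hmem
    have h1 := hTbest s hs (btup w (i + 1) v s.1) hbts rfl
    have h2 := tkey_eq_of_le_le h1 ((L1 s hsc).2.2)
    have e1 : s.2.1 = hdist w (i + 1) v s.1 := congrArg (fun p : ℝ≥0∞ × ℕ × ℕ => p.1) h2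
    have e2 : s.2.2 = minHops w (i + 1) v s.1 := congrArg (fun p : ℝ≥0∞ × ℕ × ℕ => p.2.1) h2
    exact ⟨hmem, Prod.ext rfl (Prod.ext e1 e2)⟩
  -- Step D: the stored sources are exactly the true k nearest sources.
  have himg : T.image Prod.fst = Sstar := by
    apply Finset.Subset.antisymm
    · intro y hy
      obtain ⟨t, ht, rfl⟩ := Finset.mem_image.1 hy
      exact (step1 t ht).1
    · intro y hy
      by_contra hyT
      by_cases hc : T.card < k
      · obtain ⟨t, ht, ht1⟩ := hTfull hc (btup w (i + 1) v y) (L2 y hy)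
        have ht1' : t.1 = y := ht1
        exact hyT (ht1' ▸ Finset.mem_image_of_mem Prod.fst ht)
      · have hck : T.card = k := le_antisymm hTcard (not_lt.1 hc)
        have hinj : Set.InjOn Prod.fst (T : Set _) := fun a ha b hb hab => hTuniq a ha b hb hab
        have hcardimg : (T.image Prod.fst).card = k := by
          rw [Finset.card_image_of_injOn hinj, hck]
        have hsub : T.image Prod.fst ⊆ Sstar := by
          intro z hz
          obtain ⟨t, ht, rfl⟩ := Finset.mem_image.1 hz
          exact (step1 t ht).1
        have heqS := Finset.eq_of_subset_of_card_le hsub (by rw [hcardimg]; exact hScard)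
        rw [← heqS] at hy
        exact hyT hy
  refine ⟨?_, ?_⟩
  · intro t ht
    obtain ⟨hmem, heq⟩ := step1 t ht
    exact ⟨hSsub hmem, congrArg (fun p : V × ℝ≥0∞ × ℕ => p.2.1) heq,
      congrArg (fun p : V × ℝ≥0∞ × ℕ => p.2.2) heq⟩
  · rw [himg]
    exact ⟨hSsub, hScard, hSfin, hSord, hSfull⟩

/-- Correctness of the truncated-to-`k` Bellman–Ford: if every vertex starts with its
own tuple (when it is a sampled source) and in each super-round keeps the `k` best
tuples among its own and those received from its neighbors, then after super-round
`i` every vertex holds exactly the tuples of its `k` nearest sampled sources under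
`(i)`-hop-limited distance, with correct distances and hop counts; in particular,
after `√n·k` super-rounds every vertex knows its `k` nearest sampled sources under
`(√n·k)`-limited distance. -/
theorem truncated_bellman_ford_correct [Fintype V] [DecidableEq V]
    (w : V → V → ℝ≥0∞) (hsymm : ∀ u v, w u v = w v u)
    (n : ℕ) (hn : n = Fintype.card V)
    (V' : Finset V) (k : ℕ) (hk : 1 ≤ k)
    (rank : V → ℕ) (hrank : Function.Injective rank)
    (B : ℕ → V → Finset (V × ℝ≥0∞ × ℕ))
    (hB0 : ∀ v, B 0 v = if v ∈ V' then {(v, 0, 0)} else ∅)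
    (hBstep : ∀ i v, IsKBest k rank (cand w (B i) v) (B (i + 1) v)) :
    (∀ i v, (∀ t ∈ B i v, t.1 ∈ V' ∧ t.2.1 = hdist w i v t.1 ∧ t.2.2 = minHops w i v t.1) ∧
      KNearestSources w V' k rank i v ((B i v).image Prod.fst)) ∧
    (∀ v, KNearestSources w V' k rank (Nat.sqrt n * k) v
      ((B (Nat.sqrt n * k) v).image Prod.fst)) := by
  classical
  have main : ∀ i v,
      (∀ t ∈ B i v, t.1 ∈ V' ∧ t.2.1 = hdist w i v t.1 ∧ t.2.2 = minHops w i v t.1) ∧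
      KNearestSources w V' k rank i v ((B i v).image Prod.fst) := by
    intro i
    induction i with
    | zero =>
      intro v
      constructor
      · intro t ht
        rw [hB0 v] at ht
        by_cases hv : v ∈ V'
        · rw [if_pos hv, Finset.mem_singleton] at ht
          subst ht
          exact ⟨hv, by simp, by simp⟩
        · rw [if_neg hv] at ht
          exact absurd ht (Finset.notMem_empty _)
      · rw [hB0 v]
        by_cases hv : v ∈ V'
        · rw [if_pos hv]
          have himg : ({(v, (0 : ℝ≥0∞), (0 : ℕ))} : Finset (V × ℝ≥0∞ × ℕ)).image Prod.fst
              = {v} := by simp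
          rw [himg]
          refine ⟨?_, ?_, ?_, ?_, ?_⟩
          · intro z hz
            rw [Finset.mem_singleton] at hz
            subst hz
            exact hv
          · simpa using hk
          · intro y hy
            rw [Finset.mem_singleton] at hy
            subst hy
            simp
          · intro y hy z hz hzS hfin
            exfalso
            have hzv : z ≠ v := fun h => hzS (h ▸ Finset.mem_singleton_self v)
            rw [hdist_zero_of_ne hzv] at hfin
            exact lt_irrefl _ hfin
          · intro z hz hfin hzS
            exfalso
            have hzv : z ≠ v := fun h => hzS (h ▸ Finset.mem_singleton_self v)
            rw [hdist_zero_of_ne hzv] at hfin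
            exact lt_irrefl _ hfin
        · rw [if_neg hv]
          refine ⟨by simp, by simp, by simp, by simp, ?_⟩
          intro z hz hfin hzS
          exfalso
          have hzv : z ≠ v := fun h => hv (h ▸ hz)
          rw [hdist_zero_of_ne hzv] at hfin
          exact lt_irrefl _ hfin
    | succ i ih =>
      intro v
      exact step_correct w hsymm V' k hk rank hrank i (B i)
        (fun u => (ih u).1) (fun u => (ih u).2) v (B (i + 1) v) (hBstep i v)
  exact ⟨main, fun v => (main (Nat.sqrt n * k) v).2⟩

end Stmt10
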